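/- Let f_c > 0, n ≥ 1, and let (x₁, y₁), …, (xₙ, yₙ) ∈ ℝ² be paired data samples. Write s^x_{ij} = sinc_{f_c}(x_i − x_j) and s^y_{ij} = sinc_{f_c}(y_i − y_j). Let a, b, e ∈ ℝⁿ have all entries nonzero, and suppose b and e satisfy the marginal BLML constraints Σ_{j=1}^n b_j s^x_{ij} = n / b_i and Σ_{j=1}^n e_j s^y_{ij} = n / e_i for every i. Define g_{XY}(x,y) = (1/n) Σᵢ a_i sinc_{f_c}(x − x_i) sinc_{f_c}(y − y_i), g_X(x) = (1/n) Σᵢ b_i sinc_{f_c}(x − x_i), and g_Y(y) = (1/n) Σᵢ e_i sinc_{f_c}(y − y_i). Then ∫∫_{ℝ²} g_{XY}(x,y) · g_X(x) · g_Y(y) dx dy = (1/n) Σ_{i=1}^n a_i / (b_i e_i). -/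

import Mathlib

open MeasureTheory

/-- The band-limited sinc kernel with cutoff frequency `fc`. -/
noncomputable def sincF (fc : ℝ) (x : ℝ) : ℝ :=
  if x = 0 then fc else Real.sin (Real.pi * fc * x) / (Real.pi * x)

open Real Set Complex
open scoped FourierTransform

lemma sincF_abs_le_fc {fc : ℝ} (hfc : 0 < fc) (x : ℝ) : |sincF fc x| ≤ fc := by
  unfold sincF
  split_ifs with h
  · simp [abs_of_pos hfc]
  · rw [abs_div]
    rw [div_le_iff₀ (by positivity : (0:ℝ) < |Real.pi * x|)]
    calc |Real.sin (Real.pi * fc * x)| ≤ |Real.pi * fc * x| := Real.abs_sin_le_abs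
      _ = fc * |Real.pi * x| := by
          rw [abs_mul, abs_mul, abs_mul]
          rw [abs_of_pos hfc, abs_of_pos Real.pi_pos]
          ring

lemma sincF_abs_le_inv {fc : ℝ} {x : ℝ} (hx : x ≠ 0) :
    |sincF fc x| ≤ 1 / (Real.pi * |x|) := by
  unfold sincF
  rw [if_neg hx, abs_div]
  rw [div_le_div_iff₀ (by positivity) (by positivity)]
  have h1 : |Real.sin (Real.pi * fc * x)| ≤ 1 := Real.abs_sin_le_one _
  have h2 : |Real.pi * x| = Real.pi * |x| := by
    rw [abs_mul, abs_of_pos Real.pi_pos]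
  rw [h2]
  nlinarith [abs_nonneg (Real.sin (Real.pi * fc * x)), Real.pi_pos, abs_nonneg x, mul_pos Real.pi_pos (abs_pos.mpr hx)]

lemma sincF_sq_le {fc : ℝ} (hfc : 0 < fc) (x : ℝ) :
    (sincF fc x)^2 ≤ (fc^2 + 1/Real.pi^2) / (1 + x^2) := by
  rw [le_div_iff₀ (by positivity : (0:ℝ) < 1 + x^2)]
  rcases eq_or_ne x 0 with h | h
  · subst h
    have : (sincF fc 0)^2 = fc^2 := by simp [sincF]
    rw [this]
    have : (0:ℝ) < 1/Real.pi^2 := by positivity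
    nlinarith
  · have h1 : (sincF fc x)^2 ≤ fc^2 := by
      rw [← _root_.sq_abs]
      exact pow_le_pow_left₀ (abs_nonneg _) (sincF_abs_le_fc hfc x) 2
    have h2 : (sincF fc x)^2 * x^2 ≤ 1/Real.pi^2 := by
      rw [← _root_.sq_abs (sincF fc x), ← _root_.sq_abs x, ← mul_pow]
      have := sincF_abs_le_inv (fc := fc) h
      have h3 : |sincF fc x| * |x| ≤ 1 / Real.pi := by
        have hax : (0:ℝ) < |x| := abs_pos.mpr h
        have : |sincF fc x| ≤ 1 / Real.pi / |x| := by
          rw [div_div]; exact sincF_abs_le_inv h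
        calc |sincF fc x| * |x| ≤ (1 / Real.pi / |x|) * |x| :=
              mul_le_mul_of_nonneg_right this (abs_nonneg _)
          _ = 1 / Real.pi := by field_simp
      calc (|sincF fc x| * |x|)^2 ≤ (1/Real.pi)^2 := by
            apply pow_le_pow_left₀ (by positivity) h3
        _ = 1/Real.pi^2 := by rw [div_pow]; norm_num
    nlinarith [sq_nonneg (sincF fc x), sq_nonneg x]

lemma sincF_measurable (fc : ℝ) : Measurable (sincF fc) := by
  unfold sincF
  apply Measurable.ite (measurableSet_eq) measurable_const
  exact ((Real.measurable_sin.comp ((measurable_const.mul measurable_id')))).div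
    (measurable_const.mul measurable_id')

lemma integrable_sincF_mul {fc : ℝ} (hfc : 0 < fc) (p q : ℝ) :
    Integrable (fun x => sincF fc (x - p) * sincF fc (x - q)) := by
  set C : ℝ := fc^2 + 1/Real.pi^2 with hC
  have hCpos : 0 < C := by positivity
  have hint : Integrable (fun x : ℝ =>
      C/2 * (1 + (x - p)^2)⁻¹ + C/2 * (1 + (x - q)^2)⁻¹) := by
    apply Integrable.add
    · exact ((integrable_inv_one_add_sq).comp_sub_right p).const_mul _
    · exact ((integrable_inv_one_add_sq).comp_sub_right q).const_mul _
  apply hint.mono'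
  · apply AEStronglyMeasurable.mul <;>
      exact ((sincF_measurable fc).comp (measurable_id'.sub measurable_const)).aestronglyMeasurable
  · filter_upwards with x
    have hab : |sincF fc (x - p) * sincF fc (x - q)| ≤
        ((sincF fc (x - p))^2 + (sincF fc (x - q))^2) / 2 := by
      rw [abs_mul]
      nlinarith [sq_nonneg (|sincF fc (x-p)| - |sincF fc (x-q)|), _root_.sq_abs (sincF fc (x-p)),
        _root_.sq_abs (sincF fc (x-q)), abs_nonneg (sincF fc (x-p)), abs_nonneg (sincF fc (x-q))]
    have h1 := sincF_sq_le hfc (x - p)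
    have h2 := sincF_sq_le hfc (x - q)
    calc ‖sincF fc (x - p) * sincF fc (x - q)‖
        = |sincF fc (x - p) * sincF fc (x - q)| := rfl
      _ ≤ ((sincF fc (x - p))^2 + (sincF fc (x - q))^2) / 2 := hab
      _ ≤ (C / (1 + (x-p)^2) + C / (1 + (x-q)^2)) / 2 := by
          have := add_le_add h1 h2
          linarith
      _ = C/2 * (1 + (x - p)^2)⁻¹ + C/2 * (1 + (x - q)^2)⁻¹ := by ring

lemma sincF_neg (fc x : ℝ) : sincF fc (-x) = sincF fc x := by
  unfold sincF
  rcases eq_or_ne x 0 with h | h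
  · simp [h]
  · rw [if_neg (neg_ne_zero.mpr h), if_neg h]
    rw [show Real.pi * fc * -x = -(Real.pi * fc * x) by ring, Real.sin_neg]
    field_simp

noncomputable def uFun (c a : ℝ) : ℝ → ℂ :=
  Set.indicator (Set.Icc (-c) c)
    (fun t => Complex.exp (((2 * Real.pi * a * t : ℝ) : ℂ) * Complex.I))

lemma exp_interval_integral {c : ℝ} (hc : 0 < c) (δ : ℝ) :
    (∫ t in (-c : ℝ)..c, Complex.exp (((2 * Real.pi * δ : ℝ) : ℂ) * Complex.I * t))
      = ((sincF (2*c) δ : ℝ) : ℂ) := by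
  rcases eq_or_ne δ 0 with h | h
  · subst h
    simp only [mul_zero, Complex.ofReal_zero, zero_mul, Complex.exp_zero, sincF, if_pos rfl]
    rw [intervalIntegral.integral_const]
    rw [Complex.real_smul]
    push_cast
    ring
  · set θ : ℝ := 2 * Real.pi * δ with hθdef
    have hθ : θ ≠ 0 := by
      have := Real.pi_pos
      simp only [hθdef]
      intro hcon
      apply h
      nlinarith
    have hk : ((θ : ℂ) * Complex.I) ≠ 0 := by
      simp [Complex.ext_iff, hθ]
    rw [integral_exp_mul_complex hk]
    have hexp : ∀ r : ℝ, Complex.exp (((r : ℝ) : ℂ) * Complex.I)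
        = ((Real.cos r : ℝ) : ℂ) + ((Real.sin r : ℝ) : ℂ) * Complex.I := by
      intro r
      rw [Complex.exp_mul_I, Complex.ofReal_cos, Complex.ofReal_sin]
    have e1 : (θ : ℂ) * Complex.I * (c : ℂ) = ((θ * c : ℝ) : ℂ) * Complex.I := by
      push_cast; ring
    have e2 : (θ : ℂ) * Complex.I * ((-c : ℝ) : ℂ) = ((-(θ * c) : ℝ) : ℂ) * Complex.I := by
      push_cast; ring
    rw [e1, e2, hexp, hexp, Real.cos_neg, Real.sin_neg]
    have hnum : (((Real.cos (θ*c) : ℝ) : ℂ) + ((Real.sin (θ*c) : ℝ) : ℂ) * Complex.I)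
        - (((Real.cos (θ*c) : ℝ) : ℂ) + ((-(Real.sin (θ*c)) : ℝ) : ℂ) * Complex.I)
        = ((2 * Real.sin (θ*c) : ℝ) : ℂ) * Complex.I := by push_cast; ring
    rw [hnum]
    have hdiv : ((2 * Real.sin (θ*c) : ℝ) : ℂ) * Complex.I / ((θ : ℂ) * Complex.I)
        = ((2 * Real.sin (θ*c) / θ : ℝ) : ℂ) := by
      rw [mul_comm ((θ:ℝ) : ℂ) Complex.I, ← div_div, mul_div_assoc,
        div_self Complex.I_ne_zero, mul_one, Complex.ofReal_div]
    rw [hdiv]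
    congr 1
    unfold sincF
    rw [if_neg h]
    rw [show Real.pi * (2*c) * δ = θ * c by rw [hθdef]; ring]
    rw [hθdef]
    have hπ : Real.pi ≠ 0 := Real.pi_ne_zero
    field_simp

lemma fourier_uFun {c : ℝ} (hc : 0 < c) (a x : ℝ) :
    𝓕 (uFun c a) x = ((sincF (2*c) (x - a) : ℝ) : ℂ) := by
  rw [Real.fourier_real_eq_integral_exp_smul]
  have key : ∀ v : ℝ, Complex.exp (((-2 * Real.pi * v * x : ℝ) : ℂ) * Complex.I) • uFun c a v
      = Set.indicator (Set.Icc (-c) c)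
          (fun t => Complex.exp (((2 * Real.pi * (a - x) : ℝ) : ℂ) * Complex.I * t)) v := by
    intro v
    unfold uFun
    rcases em (v ∈ Set.Icc (-c) c) with hv | hv
    · rw [Set.indicator_of_mem hv, Set.indicator_of_mem hv, smul_eq_mul, ← Complex.exp_add]
      congr 1
      push_cast
      ring
    · rw [Set.indicator_of_notMem hv, Set.indicator_of_notMem hv, smul_eq_mul, mul_zero]
  simp_rw [key]
  rw [MeasureTheory.integral_indicator measurableSet_Icc,
    MeasureTheory.integral_Icc_eq_integral_Ioc,
    ← intervalIntegral.integral_of_le (by linarith : (-c) ≤ c)]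
  rw [exp_interval_integral hc (a - x)]
  rw [show x - a = -(a - x) by ring, sincF_neg]

noncomputable def prim (d : ℝ) (y : ℝ) : ℂ :=
  ∫ t in (0:ℝ)..y, Complex.exp (((2 * Real.pi * d : ℝ) : ℂ) * Complex.I * t)

lemma continuous_prim (d : ℝ) : Continuous (prim d) := by
  apply intervalIntegral.continuous_primitive
  intro a b
  apply Continuous.intervalIntegrable
  exact Complex.continuous_exp.comp (by continuity)

lemma prim_sub {d : ℝ} (p q : ℝ) :
    prim d q - prim d p = ∫ t in p..q, Complex.exp (((2 * Real.pi * d : ℝ) : ℂ) * Complex.I * t) := by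
  unfold prim
  apply intervalIntegral.integral_interval_sub_left <;>
  · apply Continuous.intervalIntegrable
    exact Complex.continuous_exp.comp (by continuity)

noncomputable def wFun (c a b x : ℝ) : ℂ :=
  Complex.exp (((2 * Real.pi * b * x : ℝ) : ℂ) * Complex.I) *
    (prim (a - b) (max (max (-c) (x - c)) (min c (x + c))) - prim (a - b) (max (-c) (x - c)))

lemma continuous_wFun (c a b : ℝ) : Continuous (wFun c a b) := by
  unfold wFun
  apply Continuous.mul
  · exact Complex.continuous_exp.comp (by continuity)
  · apply Continuous.sub
    · exact (continuous_prim (a-b)).comp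
        (((continuous_const.max (continuous_id.sub continuous_const)).max
          (continuous_const.min (continuous_id.add continuous_const))))
    · exact (continuous_prim (a-b)).comp
        (continuous_const.max (continuous_id.sub continuous_const))

lemma wFun_zero {c : ℝ} (hc : 0 < c) (a b : ℝ) :
    wFun c a b 0 = ((sincF (2*c) (a - b) : ℝ) : ℂ) := by
  unfold wFun
  have h1 : max (-c) ((0:ℝ) - c) = -c := by rw [zero_sub, max_self]
  have h2 : min c ((0:ℝ) + c) = c := by rw [zero_add, min_self]
  rw [h1, h2, max_eq_right (by linarith : -c ≤ c)]
  rw [prim_sub, exp_interval_integral hc (a - b)]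
  norm_num

lemma wFun_support {c : ℝ} (hc : 0 < c) (a b : ℝ) {x : ℝ}
    (hx : x ∉ Set.Icc (-(2*c)) (2*c)) : wFun c a b x = 0 := by
  unfold wFun
  simp only [Set.mem_Icc, not_and_or, not_le] at hx
  have : max (max (-c) (x - c)) (min c (x + c)) = max (-c) (x - c) := by
    apply max_eq_left
    rcases hx with h | h
    · exact le_trans (min_le_right _ _) (le_max_of_le_left (by linarith))
    · exact le_trans (min_le_left _ _) (le_max_of_le_right (by linarith))
  rw [this, sub_self, mul_zero]

lemma integrable_uFun (c a : ℝ) : Integrable (uFun c a) := by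
  unfold uFun
  rw [MeasureTheory.integrable_indicator_iff measurableSet_Icc]
  apply Continuous.integrableOn_Icc
  exact Complex.continuous_exp.comp (by continuity)

lemma wFun_eq_integral {c : ℝ} (hc : 0 < c) (a b x : ℝ) :
    wFun c a b x = ∫ t, uFun c a t * uFun c b (x - t) := by
  set m := max (-c) (x - c) with hm
  set M := min c (x + c) with hM
  have hset : (fun t => uFun c a t * uFun c b (x - t)) =
      Set.indicator (Set.Icc m M)
        (fun t => Complex.exp (((2 * Real.pi * a * t : ℝ) : ℂ) * Complex.I) *
          Complex.exp (((2 * Real.pi * b * (x - t) : ℝ) : ℂ) * Complex.I)) := by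
    funext t
    have hmem : t ∈ Set.Icc m M ↔
        (t ∈ Set.Icc (-c) c ∧ x - t ∈ Set.Icc (-c) c) := by
      simp only [hm, hM, Set.mem_Icc, max_le_iff, le_min_iff]
      constructor
      · rintro ⟨⟨h1, h2⟩, h3, h4⟩
        exact ⟨⟨h1, h3⟩, by linarith, by linarith⟩
      · rintro ⟨⟨h1, h3⟩, h5, h6⟩
        exact ⟨⟨h1, by linarith⟩, h3, by linarith⟩
    rcases em (t ∈ Set.Icc m M) with h | h
    · rw [Set.indicator_of_mem h]
      obtain ⟨h1, h2⟩ := hmem.1 h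
      unfold uFun
      rw [Set.indicator_of_mem h1, Set.indicator_of_mem h2]
    · rw [Set.indicator_of_notMem h]
      rw [hmem, not_and_or] at h
      unfold uFun
      rcases h with h | h
      · rw [Set.indicator_of_notMem h, zero_mul]
      · rw [Set.indicator_of_notMem h, mul_zero]
  rw [hset, MeasureTheory.integral_indicator measurableSet_Icc]
  rcases le_or_gt m M with hle | hlt
  · rw [MeasureTheory.integral_Icc_eq_integral_Ioc,
      ← intervalIntegral.integral_of_le hle]
    have : (fun t : ℝ => Complex.exp (((2 * Real.pi * a * t : ℝ) : ℂ) * Complex.I) *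
          Complex.exp (((2 * Real.pi * b * (x - t) : ℝ) : ℂ) * Complex.I)) =
        (fun t : ℝ => Complex.exp (((2 * Real.pi * b * x : ℝ) : ℂ) * Complex.I) *
          Complex.exp (((2 * Real.pi * (a - b) : ℝ) : ℂ) * Complex.I * t)) := by
      funext t
      rw [← Complex.exp_add, ← Complex.exp_add]
      congr 1
      push_cast
      ring
    rw [this, intervalIntegral.integral_const_mul]
    unfold wFun
    rw [← hm, ← hM, max_eq_right hle, prim_sub]
  · rw [Set.Icc_eq_empty (not_le.mpr hlt), MeasureTheory.setIntegral_empty]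
    unfold wFun
    rw [← hm, ← hM, max_eq_left hlt.le, sub_self, mul_zero]

lemma integrable_wFun {c : ℝ} (hc : 0 < c) (a b : ℝ) : Integrable (wFun c a b) := by
  apply (continuous_wFun c a b).integrable_of_hasCompactSupport
  exact HasCompactSupport.intro isCompact_Icc (fun x hx => wFun_support hc a b hx)

set_option maxHeartbeats 1000000 in
lemma fourier_wFun {c : ℝ} (hc : 0 < c) (a b x : ℝ) :
    𝓕 (wFun c a b) x = 𝓕 (uFun c a) x * 𝓕 (uFun c b) x := by
  simp only [Real.fourier_real_eq_integral_exp_smul, smul_eq_mul]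
  set e : ℝ → ℂ := fun v => Complex.exp (((-2 * Real.pi * v * x : ℝ) : ℂ) * Complex.I) with he
  have hprod : Integrable (fun p : ℝ × ℝ => e p.1 * (uFun c a p.2 * uFun c b (p.1 - p.2)))
      (volume.prod volume) := by
    have base : Integrable (fun p : ℝ × ℝ => uFun c a p.2 * uFun c b (p.1 - p.2))
        (volume.prod volume) :=
      MeasureTheory.Integrable.convolution_integrand (ContinuousLinearMap.mul ℂ ℂ)
        (integrable_uFun c a) (integrable_uFun c b)
    apply base.bdd_mul (c := 1)
    · have hce : Continuous (fun v : ℝ => e v) := by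
        apply Complex.continuous_exp.comp
        exact (Complex.continuous_ofReal.comp (by continuity)).mul continuous_const
      exact (hce.comp continuous_fst).aestronglyMeasurable
    · refine Filter.Eventually.of_forall (fun p => ?_)
      simp only [he]
      rw [Complex.norm_exp_ofReal_mul_I]
  calc (∫ v, e v * wFun c a b v)
      = ∫ v, ∫ t, e v * (uFun c a t * uFun c b (v - t)) := by
        congr 1
        funext v
        rw [wFun_eq_integral hc, ← MeasureTheory.integral_const_mul]
    _ = ∫ t, ∫ v, e v * (uFun c a t * uFun c b (v - t)) := by
        apply MeasureTheory.integral_integral_swap hprod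
    _ = ∫ t, (e t * uFun c a t) * ∫ s, e s * uFun c b s := by
        congr 1
        funext t
        rw [← MeasureTheory.integral_add_right_eq_self
          (fun v => e v * (uFun c a t * uFun c b (v - t))) t]
        simp only [add_sub_cancel_right]
        rw [← MeasureTheory.integral_const_mul]
        congr 1
        funext s
        simp only [he]
        have hsplit : Complex.exp (((-2 * Real.pi * (s + t) * x : ℝ) : ℂ) * Complex.I)
            = Complex.exp (((-2 * Real.pi * t * x : ℝ) : ℂ) * Complex.I) *
              Complex.exp (((-2 * Real.pi * s * x : ℝ) : ℂ) * Complex.I) := by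
          rw [← Complex.exp_add]
          congr 1
          push_cast
          ring
        rw [hsplit]
        ring
    _ = (∫ t, e t * uFun c a t) * ∫ s, e s * uFun c b s := by
        rw [MeasureTheory.integral_mul_const]

lemma sincF_reproducing {fc : ℝ} (hfc : 0 < fc) (p q : ℝ) :
    ∫ x, sincF fc (x - p) * sincF fc (x - q) = sincF fc (p - q) := by
  set c : ℝ := fc / 2 with hcdef
  have hc : 0 < c := by positivity
  have h2c : 2 * c = fc := by rw [hcdef]; ring
  have hF : 𝓕 (wFun c p q) = fun x => ((sincF fc (x - p) * sincF fc (x - q) : ℝ) : ℂ) := by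
    funext x
    rw [fourier_wFun hc, fourier_uFun hc, fourier_uFun hc, ← Complex.ofReal_mul, h2c]
  have hW : Integrable (wFun c p q) := integrable_wFun hc p q
  have hFi : Integrable (𝓕 (wFun c p q)) := by
    rw [hF]
    exact (integrable_sincF_mul hfc p q).ofReal
  have hinv := hW.fourierInv_fourier_eq hFi ((continuous_wFun c p q).continuousAt (x := 0))
  rw [Real.fourierInv_eq] at hinv
  simp only [inner_zero_right] at hinv
  norm_num at hinv
  rw [hF, wFun_zero hc, h2c] at hinv
  beta_reduce at hinv
  have h2 : ((∫ x, sincF fc (x - p) * sincF fc (x - q) : ℝ) : ℂ)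
      = ((sincF fc (p - q) : ℝ) : ℂ) := by
    rw [← hinv]
    exact (integral_ofReal (𝕜 := ℂ)).symm
  exact_mod_cast h2

/-- Key integral identity behind the closed-form mutual dependence estimator:
if `b` and `e` satisfy the marginal BLML constraints
`Σⱼ bⱼ s^x_{ij} = n/bᵢ` and `Σⱼ eⱼ s^y_{ij} = n/eᵢ`, then
`∫∫ g_{XY}(x,y) g_X(x) g_Y(y) dx dy = (1/n) Σᵢ aᵢ/(bᵢ eᵢ)`. -/
theorem blml_cross_integral_identity
    (fc : ℝ) (hfc : 0 < fc) (n : ℕ) (hn : 1 ≤ n)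
    (xs ys : Fin n → ℝ) (a b e : Fin n → ℝ)
    (ha : ∀ i, a i ≠ 0) (hb : ∀ i, b i ≠ 0) (he : ∀ i, e i ≠ 0)
    (hcb : ∀ i, ∑ j, b j * sincF fc (xs i - xs j) = n / b i)
    (hce : ∀ i, ∑ j, e j * sincF fc (ys i - ys j) = n / e i)
    (gXY : ℝ × ℝ → ℝ) (gX gY : ℝ → ℝ)
    (hgXY : ∀ x y, gXY (x, y) =
      (1 / n : ℝ) * ∑ i, a i * sincF fc (x - xs i) * sincF fc (y - ys i))
    (hgX : ∀ x, gX x = (1 / n : ℝ) * ∑ i, b i * sincF fc (x - xs i))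
    (hgY : ∀ y, gY y = (1 / n : ℝ) * ∑ i, e i * sincF fc (y - ys i)) :
    ∫ p : ℝ × ℝ, gXY p * gX p.1 * gY p.2
      = (1 / n : ℝ) * ∑ i, a i / (b i * e i) := by
  have hnn : (n : ℝ) ≠ 0 := by
    have : (0:ℝ) < n := by exact_mod_cast Nat.lt_of_lt_of_le Nat.zero_lt_one hn
    exact ne_of_gt this
  -- F i and G i
  set F : Fin n → ℝ → ℝ := fun i x => sincF fc (x - xs i) * gX x with hF
  set G : Fin n → ℝ → ℝ := fun i y => sincF fc (y - ys i) * gY y with hG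
  have hFeq : ∀ i, F i = fun x => ∑ j, (1/n * b j) *
      (sincF fc (x - xs i) * sincF fc (x - xs j)) := by
    intro i
    funext x
    simp only [hF, hgX x, Finset.mul_sum]
    apply Finset.sum_congr rfl
    intro j _
    ring
  have hGeq : ∀ i, G i = fun y => ∑ j, (1/n * e j) *
      (sincF fc (y - ys i) * sincF fc (y - ys j)) := by
    intro i
    funext y
    simp only [hG, hgY y, Finset.mul_sum]
    apply Finset.sum_congr rfl
    intro j _
    ring
  have hFint : ∀ i, Integrable (F i) := by
    intro i
    rw [hFeq i]
    apply MeasureTheory.integrable_finset_sum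
    intro j _
    exact (integrable_sincF_mul hfc (xs i) (xs j)).const_mul _
  have hGint : ∀ i, Integrable (G i) := by
    intro i
    rw [hGeq i]
    apply MeasureTheory.integrable_finset_sum
    intro j _
    exact (integrable_sincF_mul hfc (ys i) (ys j)).const_mul _
  have hFval : ∀ i, ∫ x, F i x = 1 / b i := by
    intro i
    rw [hFeq i]
    rw [MeasureTheory.integral_finset_sum _
      (fun j _ => (integrable_sincF_mul hfc (xs i) (xs j)).const_mul _)]
    have : ∀ j : Fin n, ∫ x, (1/n * b j) * (sincF fc (x - xs i) * sincF fc (x - xs j))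
        = (1/n : ℝ) * (b j * sincF fc (xs i - xs j)) := by
      intro j
      rw [MeasureTheory.integral_const_mul, sincF_reproducing hfc]
      ring
    simp_rw [this]
    rw [← Finset.mul_sum, hcb i]
    field_simp
  have hGval : ∀ i, ∫ y, G i y = 1 / e i := by
    intro i
    rw [hGeq i]
    rw [MeasureTheory.integral_finset_sum _
      (fun j _ => (integrable_sincF_mul hfc (ys i) (ys j)).const_mul _)]
    have : ∀ j : Fin n, ∫ y, (1/n * e j) * (sincF fc (y - ys i) * sincF fc (y - ys j))
        = (1/n : ℝ) * (e j * sincF fc (ys i - ys j)) := by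
      intro j
      rw [MeasureTheory.integral_const_mul, sincF_reproducing hfc]
      ring
    simp_rw [this]
    rw [← Finset.mul_sum, hce i]
    field_simp
  have hintegrand : (fun p : ℝ × ℝ => gXY p * gX p.1 * gY p.2)
      = fun p => ∑ i, (a i / n) * (F i p.1 * G i p.2) := by
    funext p
    rcases p with ⟨x, y⟩
    simp only [hgXY x y, hF, hG]
    rw [Finset.mul_sum, Finset.sum_mul, Finset.sum_mul]
    apply Finset.sum_congr rfl
    intro i _
    ring
  rw [hintegrand, MeasureTheory.Measure.volume_eq_prod]
  rw [MeasureTheory.integral_finset_sum _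
    (fun i _ => ((hFint i).mul_prod (hGint i)).const_mul (a i / n))]
  have hterm : ∀ i : Fin n, (∫ p : ℝ × ℝ, (a i / n) * (F i p.1 * G i p.2)
      ∂((volume : Measure ℝ).prod volume)) = (a i / n) * ((1 / b i) * (1 / e i)) := by
    intro i
    rw [MeasureTheory.integral_const_mul, MeasureTheory.integral_prod_mul, hFval, hGval]
  simp_rw [hterm]
  rw [Finset.mul_sum]
  apply Finset.sum_congr rfl
  intro i _
  have hbi := hb i
  have hei := he i
  field_simp
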